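/- Let A be a unital C*-algebra and u ∈ A a unitary. Then u is a C*-extreme point of the closed unit ball of A: whenever u = ∑_{i=1}^k tᵢ* aᵢ tᵢ with ‖aᵢ‖ ≤ 1 and tᵢ invertible satisfying ∑ tᵢ*tᵢ = 1, each aᵢ is unitarily equivalent to u. -/

import Mathlib

open Finset in
private lemma cstar_step {A : Type*} [CStarAlgebra A] [PartialOrder A] [StarOrderedRing A]
    (u : A) (hu : star u * u = 1) (k : ℕ) (a t : Fin k → A)
    (hA : ∀ j, star (a j) * a j ≤ 1)
    (hsum : (∑ j, star (t j) * t j) = 1)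
    (heq : u = ∑ j, star (t j) * a j * t j) :
    ∀ j, a j * t j = t j * u := by
  set y : Fin k → A := fun j => a j * t j - t j * u with hy
  have expand : ∀ j, star (y j) * y j
      = star (t j) * (star (a j) * a j) * t j
        - star (star (t j) * a j * t j) * u
        - star u * (star (t j) * a j * t j)
        + star u * (star (t j) * t j) * u := by
    intro j
    simp only [hy, star_sub, star_mul, star_star]
    noncomm_ring
  have hsum_y : ∑ j, star (y j) * y j
      = (∑ j, star (t j) * (star (a j) * a j) * t j) - 1 := by
    rw [Finset.sum_congr rfl (fun j _ => expand j)]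
    rw [Finset.sum_add_distrib, Finset.sum_sub_distrib, Finset.sum_sub_distrib,
      ← Finset.sum_mul, ← Finset.mul_sum, ← star_sum]
    have h4 : ∑ j, star u * (star (t j) * t j) * u = star u * (∑ j, star (t j) * t j) * u := by
      rw [Finset.mul_sum, Finset.sum_mul]
    rw [h4, hsum, ← heq, mul_one, hu]
    abel
  have hle : (∑ j, star (t j) * (star (a j) * a j) * t j) ≤ 1 := by
    calc (∑ j, star (t j) * (star (a j) * a j) * t j)
        ≤ ∑ j, star (t j) * t j := by
          refine Finset.sum_le_sum fun j _ => ?_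
          simpa using star_left_conjugate_le_conjugate (hA j) (t j)
      _ = 1 := hsum
  have hzero : ∑ j, star (y j) * y j = 0 := by
    refine le_antisymm ?_ (Finset.sum_nonneg fun j _ => star_mul_self_nonneg (y j))
    rw [hsum_y]
    exact sub_nonpos.mpr hle
  intro j
  have := (Finset.sum_eq_zero_iff_of_nonneg
    (fun j _ => star_mul_self_nonneg (y j))).mp hzero j (Finset.mem_univ j)
  have hyj : y j = 0 := (CStarRing.star_mul_self_eq_zero_iff (y j)).mp this
  have := sub_eq_zero.mp hyj
  simpa [hy] using this

private lemma cstar_aux {A : Type*} [CStarAlgebra A] [PartialOrder A] [StarOrderedRing A]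
    (u : A) (hu : star u * u = 1) (hu' : u * star u = 1)
    (k : ℕ) (a t : Fin k → A) (ha : ∀ i, ‖a i‖ ≤ 1) (ht : ∀ i, IsUnit (t i))
    (hsum : (∑ i, star (t i) * t i) = 1) (heq : u = ∑ i, star (t i) * a i * t i)
    (i : Fin k) : ∃ v : A, star v * v = 1 ∧ v * star v = 1 ∧ a i = star v * u * v := by
  -- contraction facts
  have hA : ∀ j, star (a j) * a j ≤ 1 := by
    intro j
    rw [← CStarAlgebra.norm_le_one_iff_of_nonneg _ (star_mul_self_nonneg (a j))]
    rw [CStarRing.norm_star_mul_self]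
    exact mul_le_one₀ (ha j) (norm_nonneg _) (ha j)
  have hA' : ∀ j, a j * star (a j) ≤ 1 := by
    intro j
    have : star (star (a j)) * star (a j) ≤ 1 := by
      rw [← CStarAlgebra.norm_le_one_iff_of_nonneg _ (star_mul_self_nonneg (star (a j)))]
      rw [CStarRing.norm_star_mul_self, norm_star]
      exact mul_le_one₀ (ha j) (norm_nonneg _) (ha j)
    simpa using this
  have hstar : star u = ∑ j, star (t j) * star (a j) * t j := by
    rw [heq, star_sum]
    refine Finset.sum_congr rfl fun j _ => ?_
    simp [star_mul, mul_assoc]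
  -- the two intertwining relations
  have h1 : ∀ j, a j * t j = t j * u :=
    cstar_step u hu k a t hA hsum heq
  have h2 : ∀ j, star (a j) * t j = t j * star u := by
    refine cstar_step (star u) (by simpa using hu') k (fun j => star (a j)) t ?_ hsum hstar
    intro j
    simpa using hA' j
  -- now work with index i
  obtain ⟨T, hT⟩ := ht i
  set tinv : A := ↑T⁻¹ with htinv
  have htt : t i * tinv = 1 := by rw [← hT, htinv]; exact_mod_cast T.mul_inv
  have htt' : tinv * t i = 1 := by rw [← hT, htinv]; exact_mod_cast T.inv_mul
  -- a i is unitary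
  have haeq : a i = t i * u * tinv := by
    have := congrArg (· * tinv) (h1 i)
    simpa [mul_assoc, htt] using this
  have haeq' : star (a i) = t i * star u * tinv := by
    have := congrArg (· * tinv) (h2 i)
    simpa [mul_assoc, htt] using this
  have hua1 : star (a i) * a i = 1 := by
    rw [haeq', haeq]
    calc (t i * star u * tinv) * (t i * u * tinv)
        = t i * star u * (tinv * t i) * u * tinv := by noncomm_ring
      _ = t i * (star u * u) * tinv := by rw [htt']; noncomm_ring
      _ = 1 := by rw [hu, mul_one, htt]
  have hua2 : a i * star (a i) = 1 := by
    rw [haeq', haeq]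
    calc (t i * u * tinv) * (t i * star u * tinv)
        = t i * u * (tinv * t i) * star u * tinv := by noncomm_ring
      _ = t i * (u * star u) * tinv := by rw [htt']; noncomm_ring
      _ = 1 := by rw [hu', mul_one, htt]
  -- p = t i * star (t i), positive, commutes with a i
  set p : A := t i * star (t i) with hp
  have hp_nonneg : 0 ≤ p := by
    rw [hp]; exact mul_star_self_nonneg (t i)
  have hap : a i * p = p * a i := by
    have h2' : star (t i) * a i = u * star (t i) := by
      have := congrArg star (h2 i)
      simpa [star_mul, star_star] using this
    calc a i * p = (a i * t i) * star (t i) := by rw [hp]; noncomm_ring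
      _ = t i * (u * star (t i)) := by rw [h1 i]; noncomm_ring
      _ = t i * (star (t i) * a i) := by rw [h2']
      _ = p * a i := by rw [hp]; noncomm_ring
  -- q = inverse of p
  set q : A := star tinv * tinv with hq
  have hpq : p * q = 1 := by
    have : star (t i) * star tinv = 1 := by
      rw [← star_mul, htt', star_one]
    calc p * q = t i * (star (t i) * star tinv) * tinv := by rw [hp, hq]; noncomm_ring
      _ = 1 := by rw [this, mul_one, htt]
  have hqp : q * p = 1 := by
    have : star tinv * star (t i) = 1 := by
      rw [← star_mul, htt, star_one]
    calc q * p = star tinv * (tinv * t i) * star (t i) := by rw [hp, hq]; noncomm_ring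
      _ = 1 := by rw [htt', mul_one, this]
  have hq_star : star q = q := by simp [hq, star_mul]
  -- s = sqrt p
  set s : A := CFC.sqrt p with hs
  have hs_nonneg : 0 ≤ s := CFC.sqrt_nonneg p
  have hss : s * s = p := CFC.sqrt_mul_sqrt_self p hp_nonneg
  have hs_star : star s = s := IsSelfAdjoint.of_nonneg hs_nonneg
  -- a i commutes with s : conjugate and use uniqueness of sqrt
  have hconj : a i * s * star (a i) = s := by
    have hnn : 0 ≤ a i * s * star (a i) := star_right_conjugate_nonneg hs_nonneg (a i)
    have hsq : (a i * s * star (a i)) * (a i * s * star (a i)) = p := by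
      calc (a i * s * star (a i)) * (a i * s * star (a i))
          = a i * s * (star (a i) * a i) * s * star (a i) := by noncomm_ring
        _ = a i * (s * s) * star (a i) := by rw [hua1]; noncomm_ring
        _ = a i * p * star (a i) := by rw [hss]
        _ = p * (a i * star (a i)) := by rw [hap]; noncomm_ring
        _ = p := by rw [hua2, mul_one]
    have := CFC.sqrt_unique hsq hnn
    rw [← hs] at this
    exact this.symm
  have has : a i * s = s * a i := by
    have := congrArg (· * a i) hconj
    simpa [mul_assoc, hua1] using this
  -- s commutes with q
  have hsp : s * p = p * s := by rw [← hss]; noncomm_ring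
  have hsq_comm : s * q = q * s := by
    calc s * q = (q * p) * (s * q) := by rw [hqp, one_mul]
      _ = q * (p * s) * q := by noncomm_ring
      _ = q * (s * p) * q := by rw [hsp]
      _ = (q * s) * (p * q) := by noncomm_ring
      _ = q * s := by rw [hpq, mul_one]
  have haq : a i * q = q * a i := by
    calc a i * q = (q * p) * (a i * q) := by rw [hqp, one_mul]
      _ = q * (p * a i) * q := by noncomm_ring
      _ = q * (a i * p) * q := by rw [hap]
      _ = (q * a i) * (p * q) := by noncomm_ring
      _ = q * a i := by rw [hpq, mul_one]
  -- r = inverse of s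
  set r : A := q * s with hr
  have hsr : s * r = 1 := by
    calc s * r = (s * q) * s := by rw [hr]; noncomm_ring
      _ = (q * s) * s := by rw [hsq_comm]
      _ = q * (s * s) := by noncomm_ring
      _ = 1 := by rw [hss, hqp]
  have hrs : r * s = 1 := by
    calc r * s = q * (s * s) := by rw [hr]; noncomm_ring
      _ = 1 := by rw [hss, hqp]
  have har : a i * r = r * a i := by
    calc a i * r = (a i * q) * s := by rw [hr]; noncomm_ring
      _ = q * (a i * s) := by rw [haq]; noncomm_ring
      _ = q * (s * a i) := by rw [has]
      _ = r * a i := by rw [hr]; noncomm_ring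
  have hr_star : star r = r := by
    rw [hr, star_mul, hs_star, hq_star, hsq_comm]
  have hrp : r * p = s := by
    calc r * p = q * (s * p) := by rw [hr]; noncomm_ring
      _ = q * (p * s) := by rw [hsp]
      _ = (q * p) * s := by noncomm_ring
      _ = s := by rw [hqp, one_mul]
  have hrr : r * r = q := by
    calc r * r = q * (s * q) * s := by rw [hr]; noncomm_ring
      _ = q * (q * s) * s := by rw [hsq_comm]
      _ = (q * q) * (s * s) := by noncomm_ring
      _ = q * (q * p) := by rw [hss]; noncomm_ring
      _ = q := by rw [hqp, mul_one]
  -- the unitary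
  refine ⟨star (t i) * r, ?_, ?_, ?_⟩
  · have hstv : star (star (t i) * r) = r * t i := by
      rw [star_mul, hr_star, star_star]
    rw [hstv]
    calc (r * t i) * (star (t i) * r) = r * p * r := by rw [hp]; noncomm_ring
      _ = s * r := by rw [hrp]
      _ = 1 := hsr
  · have hstv : star (star (t i) * r) = r * t i := by
      rw [star_mul, hr_star, star_star]
    rw [hstv]
    have h5 : star (t i) * star tinv = 1 := by rw [← star_mul, htt', star_one]
    calc (star (t i) * r) * (r * t i) = star (t i) * (r * r) * t i := by noncomm_ring
      _ = star (t i) * q * t i := by rw [hrr]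
      _ = (star (t i) * star tinv) * (tinv * t i) := by rw [hq]; noncomm_ring
      _ = 1 := by rw [h5, htt', mul_one]
  · have hstv : star (star (t i) * r) = r * t i := by
      rw [star_mul, hr_star, star_star]
    rw [hstv]
    calc a i = a i * (s * r) := by rw [hsr, mul_one]
      _ = a i * (r * p) * r := by rw [hrp]; noncomm_ring
      _ = (a i * r) * p * r := by noncomm_ring
      _ = r * (a i * p) * r := by rw [har]; noncomm_ring
      _ = r * ((a i * t i) * star (t i)) * r := by rw [hp]; noncomm_ring
      _ = r * ((t i * u) * star (t i)) * r := by rw [h1 i]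
      _ = (r * t i) * u * (star (t i) * r) := by noncomm_ring

/-- Every unitary in a unital C*-algebra is a C*-extreme point of the closed unit
ball. -/
theorem unitary_is_cstarExtreme {A : Type*} [NormedRing A] [StarRing A]
    [CStarRing A] [NormedAlgebra ℂ A] [CompleteSpace A] [StarModule ℂ A]
    (u : A) (hu : star u * u = 1) (hu' : u * star u = 1) :
    ∀ (k : ℕ) (a t : Fin k → A), (∀ i, ‖a i‖ ≤ 1) → (∀ i, IsUnit (t i)) →
      (∑ i, star (t i) * t i) = 1 → u = ∑ i, star (t i) * a i * t i →
      ∀ i, ∃ v : A, star v * v = 1 ∧ v * star v = 1 ∧ a i = star v * u * v := by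
  letI : CStarAlgebra A :=
    { ‹NormedRing A›, ‹StarRing A›, ‹CStarRing A›, ‹NormedAlgebra ℂ A›,
      ‹CompleteSpace A›, ‹StarModule ℂ A› with }
  letI : PartialOrder A := CStarAlgebra.spectralOrder A
  haveI : StarOrderedRing A := CStarAlgebra.spectralOrderedRing A
  intro k a t ha ht hsum heq i
  exact cstar_aux u hu hu' k a t ha ht hsum heq i
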